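/- Let Γ₀ be a group and Σ₀ ≤ Γ₀ a subgroup such that: (1) [Σ₀ : Σ₀ ∩ gΣ₀g⁻¹] = ∞ for every g ∈ Γ₀ \ Σ₀, and (2) the centralizer in Γ₀ of every finite-index subgroup of Σ₀ is trivial. Let G = Γ₀ × Γ₀ and let Σ = {(g,g) : g ∈ Σ₀} be the diagonal copy of Σ₀. Then every h = (h₁,h₂) ∈ G with [Σ : Σ ∩ hΣh⁻¹] < ∞ lies in Σ. -/

import Mathlib

/-- The conjugate subgroup `g S g⁻¹`. -/
def conjSub {G : Type*} [Group G] (g : G) (S : Subgroup G) : Subgroup G :=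
  S.map (MulAut.conj g).toMonoidHom

/-- For the diagonal copy `S` of `S₀` in `Γ₀ × Γ₀`, under conditions (1) and (2),
any `h` with `[S : S ∩ hSh⁻¹] < ∞` lies in `S`. -/
theorem stmt14 {Γ₀ : Type*} [Group Γ₀] (S₀ : Subgroup Γ₀)
    (h1 : ∀ g : Γ₀, g ∉ S₀ → (conjSub g S₀).relIndex S₀ = 0)
    (h2 : ∀ S₁ : Subgroup Γ₀, S₁ ≤ S₀ → S₁.relIndex S₀ ≠ 0 →
      Subgroup.centralizer (S₁ : Set Γ₀) = ⊥) :
    ∀ h : Γ₀ × Γ₀,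
      (conjSub h (S₀.map ((MonoidHom.id Γ₀).prod (MonoidHom.id Γ₀)))).relIndex
        (S₀.map ((MonoidHom.id Γ₀).prod (MonoidHom.id Γ₀))) ≠ 0 →
      h ∈ S₀.map ((MonoidHom.id Γ₀).prod (MonoidHom.id Γ₀)) := by
  intro h hrel
  obtain ⟨h₁, h₂⟩ := h
  set φ : Γ₀ →* Γ₀ × Γ₀ := (MonoidHom.id Γ₀).prod (MonoidHom.id Γ₀) with hφ
  set D := S₀.map φ with hD
  set C := conjSub (h₁, h₂) D with hC
  set T := C.comap φ with hT
  have hTrel : T.relIndex S₀ ≠ 0 := by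
    rw [hT, Subgroup.relIndex_comap]; exact hrel
  have hmem : ∀ g : Γ₀, g ∈ T ↔
      ∃ s ∈ S₀, h₁ * s * h₁⁻¹ = g ∧ h₂ * s * h₂⁻¹ = g := by
    intro g
    constructor
    · intro hg
      rw [hT, Subgroup.mem_comap] at hg
      obtain ⟨x, hx, hconj⟩ := hg
      obtain ⟨s, hs, rfl⟩ := hx
      have e1 := congrArg Prod.fst hconj
      have e2 := congrArg Prod.snd hconj
      exact ⟨s, hs, by simpa [mul_assoc, hφ] using e1, by simpa [mul_assoc, hφ] using e2⟩
    · rintro ⟨s, hs, hg1, hg2⟩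
      rw [hT, Subgroup.mem_comap]
      refine ⟨φ s, ⟨s, hs, rfl⟩, ?_⟩
      show ((h₁, h₂) * (s, s) * (h₁, h₂)⁻¹ : Γ₀ × Γ₀) = (g, g)
      rw [Prod.ext_iff]
      simpa [mul_assoc] using And.intro hg1 hg2
  -- h₁ * h₂⁻¹ centralizes T ⊓ S₀
  have hcent : h₁ * h₂⁻¹ ∈ Subgroup.centralizer ((T ⊓ S₀ : Subgroup Γ₀) : Set Γ₀) := by
    rw [Subgroup.mem_centralizer_iff]
    rintro g ⟨hgT, hgS⟩
    obtain ⟨s, hs, hg1, hg2⟩ := (hmem g).mp hgT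
    have : h₁ * s * h₁⁻¹ = h₂ * s * h₂⁻¹ := hg1.trans hg2.symm
    -- g = h₁ s h₁⁻¹, so g * (h₁ h₂⁻¹) = h₁ s h₂⁻¹ = (h₁ h₂⁻¹) * (h₂ s h₂⁻¹) = (h₁ h₂⁻¹) * g
    calc g * (h₁ * h₂⁻¹) = (h₁ * s * h₁⁻¹) * (h₁ * h₂⁻¹) := by rw [hg1]
      _ = (h₁ * h₂⁻¹) * (h₂ * s * h₂⁻¹) := by group
      _ = (h₁ * h₂⁻¹) * g := by rw [hg2]
  have heq : h₁ = h₂ := by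
    have hb := h2 (T ⊓ S₀) inf_le_right (by rwa [Subgroup.inf_relIndex_right])
    rw [hb, Subgroup.mem_bot] at hcent
    exact mul_inv_eq_one.mp hcent
  subst heq
  have hTeq : T = conjSub h₁ S₀ := by
    ext g
    rw [hmem]
    simp only [conjSub, Subgroup.mem_map, MulEquiv.coe_toMonoidHom, MulAut.conj_apply]
    constructor
    · rintro ⟨s, hs, hg, -⟩; exact ⟨s, hs, hg⟩
    · rintro ⟨s, hs, rfl⟩; exact ⟨s, hs, rfl, rfl⟩
  have hmemS : h₁ ∈ S₀ := by
    by_contra hn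
    exact hTrel (hTeq ▸ h1 h₁ hn)
  exact ⟨h₁, hmemS, rfl⟩
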